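/- Completeness of C_nᴰ with respect to swap Kripke models: let n ≥ 2; for every set of formulas Γ ∪ {φ} ⊆ For(Σ₁ᴰ), if Γ ⊨_{C_nᴰ} φ then Γ ⊢_{C_nᴰ} φ. -/

import Mathlib

/-- Formulas over the signature Σ₁ᴰ = {∧, ∨, →, ¬, O}, with countably many
propositional variables. -/
inductive Form : Type
  | var : ℕ → Form
  | and : Form → Form → Form
  | or : Form → Form → Form
  | imp : Form → Form → Form
  | neg : Form → Form
  | obl : Form → Form

namespace Form

/-- α⁰ = α, α^{k+1} = ¬(α^k ∧ ¬α^k). -/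
def pow (α : Form) : ℕ → Form
  | 0 => α
  | k + 1 => ((α.pow k).and (α.pow k).neg).neg

/-- α^{(n)} = α¹ ∧ … ∧ αⁿ (for n ≥ 1). -/
def bigPow (α : Form) : ℕ → Form
  | 0 => α.pow 1
  | 1 => α.pow 1
  | m + 2 => (α.bigPow (m + 1)).and (α.pow (m + 2))

/-- ∼^{(n)}α := ¬α ∧ α^{(n)}. -/
def snn (n : ℕ) (α : Form) : Form := α.neg.and (α.bigPow n)

end Form

/-- The n+2 snapshots of the swap structure for C_nᴰ: T_n, t^n_0, …, t^n_{n-1}, F_n. -/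
inductive SVn (n : ℕ) : Type
  | T : SVn n
  | t : Fin n → SVn n
  | F : SVn n
deriving DecidableEq

namespace SVn

/-- The coordinates of a snapshot, as an element of 2^{n+1} (0-indexed):
T_n = (1,0,1,…,1), t^n_i has its unique 0 at (0-indexed) position i+2
(so t^n_{n-1} = (1,…,1)), and F_n = (0,1,…,1). -/
def coord {n : ℕ} : SVn n → Fin (n + 1) → Bool
  | .T, j => decide (j.val ≠ 1)
  | .t i, j => decide (j.val ≠ i.val + 2)
  | .F, j => decide (j.val ≠ 0)

/-- First coordinate z₁. -/
def p1 {n : ℕ} (z : SVn n) : Bool := z.coord 0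

/-- Second coordinate z₂. -/
def p2 {n : ℕ} (z : SVn n) : Bool := z.coord 1

/-- Designated values D_n = A_n ∖ {F_n}, i.e. first coordinate 1. -/
def desig {n : ℕ} (z : SVn n) : Prop := z.p1 = true

/-- Boolean values Boo_n = {T_n, F_n}. -/
def boo {n : ℕ} (z : SVn n) : Prop := z = SVn.T ∨ z = SVn.F

/-- Inconsistent values I_n = A_n ∖ Boo_n. -/
def incons {n : ℕ} (z : SVn n) : Prop := ∃ i : Fin n, z = SVn.t i

end SVn

/-- Boolean implication a ⊃ b. -/
def boolImp (a b : Bool) : Bool := !a || b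

/-- Membership of c in a #̃ b for a binary connective # with Boolean counterpart
`op`: c₁ = a₁ op b₁, and moreover c ∈ Boo_n whenever a, b ∈ Boo_n. -/
def opCond {n : ℕ} (op : Bool → Bool → Bool) (c a b : SVn n) : Prop :=
  c.p1 = op a.p1 b.p1 ∧ (a.boo → b.boo → c.boo)

/-- Swap Kripke pre-model conditions for C_nᴰ on a serial frame (W,R) with
valuations v_w : Form → A_n. -/
structure IsPreModelCnD (n : ℕ) {W : Type} (R : W → W → Prop)
    (v : W → Form → SVn n) : Prop where
  serial : ∀ w, ∃ w', R w w'
  and_ : ∀ w α β, opCond (· && ·) (v w (α.and β)) (v w α) (v w β)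
  or_ : ∀ w α β, opCond (· || ·) (v w (α.or β)) (v w α) (v w β)
  imp_ : ∀ w α β, opCond boolImp (v w (α.imp β)) (v w α) (v w β)
  neg_ : ∀ w α, (v w α.neg).p1 = (v w α).p2 ∧ (v w α.neg).p2 ≤ (v w α).p1
  obl_ : ∀ w α, ((v w α.obl).p1 = true ↔ ∀ w', R w w' → (v w' α).p1 = true)

/-- The RNmatrix restrictions on valuations:
(i) v_w(α) = t^n_0 implies v_w(α ∧ ¬α) = T_n;
(ii) for 1 ≤ k ≤ n−1, v_w(α) = t^n_k implies v_w(α ∧ ¬α) ∈ I_n and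
v_w(α¹) = t^n_{k−1}. -/
def RestrCnD (n : ℕ) {W : Type} (v : W → Form → SVn n) : Prop :=
  (∀ (w : W) (α : Form) (h0 : 0 < n),
      v w α = SVn.t ⟨0, h0⟩ → v w (α.and α.neg) = SVn.T) ∧
  (∀ (w : W) (α : Form) (k : ℕ) (hk : k < n), 1 ≤ k → v w α = SVn.t ⟨k, hk⟩ →
      (v w (α.and α.neg)).incons ∧ v w (α.pow 1) = SVn.t ⟨k - 1, by omega⟩)

/-- A swap Kripke model for C_nᴰ: a pre-model satisfying the restrictions (i), (ii)
and (iii): v_w(α) ∈ Boo_n implies v_w(Oα) ∈ Boo_n. -/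
structure IsModelCnD (n : ℕ) {W : Type} (R : W → W → Prop)
    (v : W → Form → SVn n) : Prop where
  pre : IsPreModelCnD n R v
  restr : RestrCnD n v
  booObl : ∀ w α, (v w α).boo → (v w α.obl).boo

/-- Theorems of the Hilbert calculus C_nᴰ: CPL⁺ axioms, (EM), (cf), (bc_n), (P_n),
(O-K), (D_n), (PO_n), with rules Modus Ponens and O-necessitation. -/
inductive ThmCnD (n : ℕ) : Form → Prop
  | A1 (α β : Form) : ThmCnD n (α.imp (β.imp α))
  | A2 (α β γ : Form) : ThmCnD n ((α.imp (β.imp γ)).imp ((α.imp β).imp (α.imp γ)))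
  | A3 (α β : Form) : ThmCnD n (α.imp (β.imp (α.and β)))
  | A4 (α β : Form) : ThmCnD n ((α.and β).imp α)
  | A5 (α β : Form) : ThmCnD n ((α.and β).imp β)
  | A6 (α β : Form) : ThmCnD n (α.imp (α.or β))
  | A7 (α β : Form) : ThmCnD n (β.imp (α.or β))
  | A8 (α β γ : Form) : ThmCnD n ((α.imp γ).imp ((β.imp γ).imp ((α.or β).imp γ)))
  | A9 (α β : Form) : ThmCnD n (((α.imp β).imp α).imp α)
  | EM (α : Form) : ThmCnD n (α.or α.neg)
  | cf (α : Form) : ThmCnD n (α.neg.neg.imp α)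
  | bcn (α β : Form) : ThmCnD n ((α.bigPow n).imp (α.imp (α.neg.imp β)))
  | Pn (α β : Form) : ThmCnD n (((α.bigPow n).and (β.bigPow n)).imp
      (((α.imp β).bigPow n).and (((α.or β).bigPow n).and ((α.and β).bigPow n))))
  | OK (α β : Form) : ThmCnD n ((α.imp β).obl.imp (α.obl.imp β.obl))
  | Dn (α : Form) : ThmCnD n (α.obl.imp (Form.snn n ((Form.snn n α).obl)))
  | POn (α : Form) : ThmCnD n ((α.bigPow n).imp (α.obl.bigPow n))
  | mp {α β : Form} : ThmCnD n (α.imp β) → ThmCnD n α → ThmCnD n β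
  | nec {α : Form} : ThmCnD n α → ThmCnD n α.obl

/-- conj γ [γ₂,…,γ_k] = γ ∧ γ₂ ∧ … ∧ γ_k -/
def conj (γ : Form) : List Form → Form
  | [] => γ
  | δ :: l => γ.and (conj δ l)

/-- Γ ⊢_{C_nᴰ} φ iff ⊢ φ or ⊢ (γ₁ ∧ … ∧ γ_k) → φ for some γ₁,…,γ_k ∈ Γ, k ≥ 1. -/
def DerivCnD (n : ℕ) (Γ : Set Form) (φ : Form) : Prop :=
  ThmCnD n φ ∨ ∃ (γ : Form) (l : List Form),
    (∀ δ ∈ γ :: l, δ ∈ Γ) ∧ ThmCnD n ((conj γ l).imp φ)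

/-- Γ ⊨_{C_nᴰ} φ : semantic consequence over all swap Kripke models for C_nᴰ. -/
def SemCnD (n : ℕ) (Γ : Set Form) (φ : Form) : Prop :=
  ∀ (W : Type) (R : W → W → Prop) (v : W → Form → SVn n), Nonempty W →
    IsModelCnD n R v → ∀ w : W, (∀ γ ∈ Γ, (v w γ).desig) → (v w φ).desig

/-! ### Auxiliary infrastructure for the completeness proof -/

deriving instance DecidableEq for Form

namespace CnDAux

open Form

/-- Derivations from a list of hypotheses, using all theorems of C_nᴰ as axioms
and Modus Ponens as the only rule. -/
inductive Prov (n : ℕ) : List Form → Form → Prop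
  | hyp {L : List Form} {φ : Form} : φ ∈ L → Prov n L φ
  | thm {L : List Form} {φ : Form} : ThmCnD n φ → Prov n L φ
  | mp {L : List Form} {α β : Form} :
      Prov n L (α.imp β) → Prov n L α → Prov n L β

variable {n : ℕ}

theorem thm_id (α : Form) : ThmCnD n (α.imp α) :=
  ((ThmCnD.A2 α (α.imp α) α).mp (ThmCnD.A1 α (α.imp α))).mp (ThmCnD.A1 α α)

theorem Prov.weaken {L L' : List Form} {φ : Form} (h : Prov n L φ)
    (hs : ∀ δ ∈ L, δ ∈ L') : Prov n L' φ := by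
  induction h with
  | hyp hm => exact Prov.hyp (hs _ hm)
  | thm ht => exact Prov.thm ht
  | mp _ _ ih1 ih2 => exact Prov.mp ih1 ih2

theorem Prov.ded_aux {M : List Form} {φ : Form} (h : Prov n M φ) :
    ∀ {L : List Form} {χ : Form}, (∀ δ ∈ M, δ = χ ∨ δ ∈ L) → Prov n L (χ.imp φ) := by
  induction h with
  | hyp hm =>
    intro L χ hM
    rcases hM _ hm with rfl | h
    · exact Prov.thm (thm_id _)
    · exact Prov.mp (Prov.thm (ThmCnD.A1 _ χ)) (Prov.hyp h)
  | thm ht =>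
    intro L χ _
    exact Prov.mp (Prov.thm (ThmCnD.A1 _ χ)) (Prov.thm ht)
  | mp _ _ ih1 ih2 =>
    intro L χ hM
    exact Prov.mp (Prov.mp (Prov.thm (ThmCnD.A2 _ _ _)) (ih1 hM)) (ih2 hM)

/-- Deduction theorem. -/
theorem Prov.ded {L : List Form} {χ φ : Form} (h : Prov n (χ :: L) φ) :
    Prov n L (χ.imp φ) :=
  h.ded_aux (fun _ hδ => List.mem_cons.mp hδ)

theorem Prov.toThm_aux {L : List Form} {φ : Form} (h : Prov n L φ) :
    L = [] → ThmCnD n φ := by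
  induction h with
  | hyp hm => intro hL; subst hL; simp at hm
  | thm ht => intro _; exact ht
  | mp _ _ ih1 ih2 => intro hL; exact (ih1 hL).mp (ih2 hL)

theorem Prov.toThm {φ : Form} (h : Prov n [] φ) : ThmCnD n φ := h.toThm_aux rfl

/-- Cut / substitution of hypotheses. -/
theorem Prov.cut_aux {L : List Form} {φ : Form} (h : Prov n L φ) :
    ∀ {L' : List Form}, (∀ δ ∈ L, Prov n L' δ) → Prov n L' φ := by
  induction h with
  | hyp hm => intro L' hs; exact hs _ hm
  | thm ht => intro _ _; exact Prov.thm ht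
  | mp _ _ ih1 ih2 => intro L' hs; exact Prov.mp (ih1 hs) (ih2 hs)

theorem Prov.cut {L L' : List Form} {φ : Form} (h : Prov n L φ)
    (hs : ∀ δ ∈ L, Prov n L' δ) : Prov n L' φ := h.cut_aux hs

theorem thm_trans {α β γ : Form} (h1 : ThmCnD n (α.imp β))
    (h2 : ThmCnD n (β.imp γ)) : ThmCnD n (α.imp γ) :=
  Prov.toThm (Prov.ded (Prov.mp (Prov.thm h2)
    (Prov.mp (Prov.thm h1) (Prov.hyp (by simp)))))

theorem conj_elem : ∀ (l : List Form) (γ δ : Form), δ ∈ γ :: l →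
    ThmCnD n ((conj γ l).imp δ)
  | [], γ, δ, hδ => by
    have hd : δ = γ := by simpa using hδ
    subst hd
    exact thm_id δ
  | ε :: l', γ, δ, hδ => by
    rcases List.mem_cons.mp hδ with h | h
    · subst h; exact ThmCnD.A4 δ (conj ε l')
    · exact thm_trans (ThmCnD.A5 γ (conj ε l')) (conj_elem l' ε δ h)

theorem prov_conj : ∀ (l : List Form) (γ : Form), Prov n (γ :: l) (conj γ l)
  | [], γ => Prov.hyp (by simp [conj])
  | δ :: l', γ =>
    Prov.mp (Prov.mp (Prov.thm (ThmCnD.A3 γ (conj δ l'))) (Prov.hyp (by simp)))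
      ((prov_conj l' δ).weaken (by intro x hx; simp at hx ⊢; tauto))

theorem conj_of_prov {l : List Form} {γ φ : Form} (h : Prov n (γ :: l) φ) :
    ThmCnD n ((conj γ l).imp φ) :=
  Prov.toThm (Prov.ded (h.cut (fun δ hδ =>
    Prov.mp (Prov.thm (conj_elem l γ δ hδ)) (Prov.hyp (by simp)))))

theorem prov_of_conj {l : List Form} {γ φ : Form}
    (h : ThmCnD n ((conj γ l).imp φ)) : Prov n (γ :: l) φ :=
  Prov.mp (Prov.thm h) (prov_conj l γ)

/-- Characterization of derivability-from-a-set via `Prov`. -/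
theorem deriv_iff {Γ : Set Form} {φ : Form} :
    DerivCnD n Γ φ ↔ ∃ L : List Form, (∀ δ ∈ L, δ ∈ Γ) ∧ Prov n L φ := by
  constructor
  · rintro (h | ⟨γ, l, hmem, himp⟩)
    · exact ⟨[], by simp, Prov.thm h⟩
    · exact ⟨γ :: l, hmem, prov_of_conj himp⟩
  · rintro ⟨L, hmem, hp⟩
    cases L with
    | nil => exact Or.inl hp.toThm
    | cons γ l => exact Or.inr ⟨γ, l, hmem, conj_of_prov hp⟩

theorem deriv_of_mem {Γ : Set Form} {φ : Form} (h : φ ∈ Γ) : DerivCnD n Γ φ :=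
  deriv_iff.mpr ⟨[φ], by simpa using h, Prov.hyp (by simp)⟩

theorem deriv_thm {Γ : Set Form} {φ : Form} (h : ThmCnD n φ) : DerivCnD n Γ φ :=
  Or.inl h

theorem deriv_mp {Γ : Set Form} {α β : Form} (h1 : DerivCnD n Γ (α.imp β))
    (h2 : DerivCnD n Γ α) : DerivCnD n Γ β := by
  obtain ⟨L1, hm1, hp1⟩ := deriv_iff.mp h1
  obtain ⟨L2, hm2, hp2⟩ := deriv_iff.mp h2
  refine deriv_iff.mpr ⟨L1 ++ L2, ?_, Prov.mp (hp1.weaken ?_) (hp2.weaken ?_)⟩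
  · intro δ hδ; rcases List.mem_append.mp hδ with h | h
    · exact hm1 _ h
    · exact hm2 _ h
  · intro δ hδ; exact List.mem_append.mpr (Or.inl hδ)
  · intro δ hδ; exact List.mem_append.mpr (Or.inr hδ)

theorem deriv_mono {Γ Γ' : Set Form} {φ : Form} (h : DerivCnD n Γ φ)
    (hs : Γ ⊆ Γ') : DerivCnD n Γ' φ := by
  obtain ⟨L, hm, hp⟩ := deriv_iff.mp h
  exact deriv_iff.mpr ⟨L, fun δ hδ => hs (hm δ hδ), hp⟩

/-- Deduction theorem for `DerivCnD`. -/
theorem deriv_ded {Γ : Set Form} {χ φ : Form}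
    (h : DerivCnD n (insert χ Γ) φ) : DerivCnD n Γ (χ.imp φ) := by
  obtain ⟨L, hm, hp⟩ := deriv_iff.mp h
  refine deriv_iff.mpr ⟨L.filter (fun x => decide (x ≠ χ)), ?_, ?_⟩
  · intro δ hδ
    have h1 := List.of_mem_filter hδ
    have h2 := List.mem_of_mem_filter hδ
    have h3 : δ ≠ χ := by simpa using h1
    rcases hm δ h2 with h | h
    · exact absurd h h3
    · exact h
  · refine Prov.ded (hp.weaken ?_)
    intro δ hδ
    by_cases hd : δ = χ
    · simp [hd]
    · exact List.mem_cons.mpr (Or.inr (List.mem_filter.mpr (by simp [hδ, hd])))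

theorem deriv_cut {Γ : Set Form} {χ φ : Form} (h1 : DerivCnD n Γ χ)
    (h2 : DerivCnD n (insert χ Γ) φ) : DerivCnD n Γ φ :=
  deriv_mp (deriv_ded h2) h1

/-- The key classical implicational fact: (α→φ) → (((α→β)→φ) → φ). -/
theorem peirce3 (α β φ : Form) :
    ThmCnD n ((α.imp φ).imp (((α.imp β).imp φ).imp φ)) := by
  refine Prov.toThm (Prov.ded (Prov.ded ?_))
  refine Prov.mp (Prov.thm (ThmCnD.A9 φ β)) (Prov.ded ?_)
  -- hypotheses: [φ→β, (α→β)→φ, α→φ]; goal φ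
  have h2 : Prov n [φ.imp β, (α.imp β).imp φ, α.imp φ] ((α.imp β).imp φ) :=
    Prov.hyp (by simp)
  refine Prov.mp h2 (Prov.ded ?_)
  -- hypotheses: [α, φ→β, (α→β)→φ, α→φ]; goal β
  have ha : Prov n [α, φ.imp β, (α.imp β).imp φ, α.imp φ] α := Prov.hyp (by simp)
  have hb : Prov n [α, φ.imp β, (α.imp β).imp φ, α.imp φ] (α.imp φ) :=
    Prov.hyp (by simp)
  have hc : Prov n [α, φ.imp β, (α.imp β).imp φ, α.imp φ] (φ.imp β) :=
    Prov.hyp (by simp)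
  exact Prov.mp hc (Prov.mp hb ha)

/-- ⊢ Oγ → (Oc → O(γ ∧ c)). -/
theorem thm_O_and (γ c : Form) :
    ThmCnD n (γ.obl.imp (c.obl.imp ((γ.and c).obl))) := by
  have h1 : ThmCnD n ((γ.imp (c.imp (γ.and c))).obl) := (ThmCnD.A3 γ c).nec
  have h2 : ThmCnD n (γ.obl.imp ((c.imp (γ.and c)).obl)) :=
    (ThmCnD.OK γ (c.imp (γ.and c))).mp h1
  exact thm_trans h2 (ThmCnD.OK c (γ.and c))

/-- ⊢ (Oγ₁ ∧ … ∧ Oγₖ) → O(γ₁ ∧ … ∧ γₖ). -/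
theorem thm_O_conj : ∀ (l : List Form) (γ : Form),
    ThmCnD n ((conj γ.obl (l.map Form.obl)).imp ((conj γ l).obl))
  | [], γ => thm_id γ.obl
  | δ :: l', γ => by
    show ThmCnD n ((γ.obl.and (conj δ.obl (l'.map Form.obl))).imp _)
    refine Prov.toThm (Prov.ded ?_)
    have ha : Prov n [γ.obl.and (conj δ.obl (l'.map Form.obl))] γ.obl :=
      Prov.mp (Prov.thm (ThmCnD.A4 γ.obl (conj δ.obl (l'.map Form.obl))))
        (Prov.hyp (by simp))
    have hb : Prov n [γ.obl.and (conj δ.obl (l'.map Form.obl))]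
        (conj δ.obl (l'.map Form.obl)) :=
      Prov.mp (Prov.thm (ThmCnD.A5 γ.obl (conj δ.obl (l'.map Form.obl))))
        (Prov.hyp (by simp))
    have hc : Prov n [γ.obl.and (conj δ.obl (l'.map Form.obl))] ((conj δ l').obl) :=
      Prov.mp (Prov.thm (thm_O_conj l' δ)) hb
    exact Prov.mp (Prov.mp (Prov.thm (thm_O_and γ (conj δ l'))) ha) hc

/-- If X is derivable from {β : Oβ ∈ Δ}, then OX is derivable from Δ. -/
theorem deriv_obl {Δ : Set Form} {X : Form}
    (h : DerivCnD n {β | β.obl ∈ Δ} X) : DerivCnD n Δ (X.obl) := by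
  rcases h with h | ⟨γ, l, hmem, himp⟩
  · exact deriv_thm h.nec
  · have h1 : ThmCnD n (((conj γ l).obl).imp X.obl) :=
      (ThmCnD.OK (conj γ l) X).mp himp.nec
    have h2 : ThmCnD n ((conj γ.obl (l.map Form.obl)).imp X.obl) :=
      thm_trans (thm_O_conj l γ) h1
    refine Or.inr ⟨γ.obl, l.map Form.obl, ?_, h2⟩
    intro δ hδ
    rcases List.mem_cons.mp hδ with h | h
    · subst h; exact hmem γ (by simp)
    · obtain ⟨δ₀, hδ₀, rfl⟩ := List.mem_map.mp h
      exact hmem δ₀ (by simp [hδ₀])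

theorem pow_add (α : Form) (i : ℕ) : ∀ k, α.pow (i + k) = (α.pow i).pow k
  | 0 => rfl
  | k + 1 => by
    have e : i + (k + 1) = (i + k) + 1 := by omega
    rw [e]
    show ((α.pow (i + k)).and (α.pow (i + k)).neg).neg = _
    rw [pow_add α i k]
    rfl

/-- Saturated theories: deductively closed and relatively maximal w.r.t. some
non-member. -/
def Sat (n : ℕ) (Δ : Set Form) : Prop :=
  (∀ χ, DerivCnD n Δ χ → χ ∈ Δ) ∧
  ∃ ψ, ψ ∉ Δ ∧ ∀ χ, χ ∉ Δ → DerivCnD n (insert χ Δ) ψ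

namespace Sat

variable {n : ℕ} {Δ : Set Form}

theorem closed (hS : Sat n Δ) {χ : Form} (h : DerivCnD n Δ χ) : χ ∈ Δ := hS.1 χ h

theorem mem_thm (hS : Sat n Δ) {χ : Form} (h : ThmCnD n χ) : χ ∈ Δ :=
  hS.closed (deriv_thm h)

theorem mem_mp (hS : Sat n Δ) {α β : Form} (h : α.imp β ∈ Δ) (ha : α ∈ Δ) :
    β ∈ Δ :=
  hS.closed (deriv_mp (deriv_of_mem h) (deriv_of_mem ha))

theorem and_mem_iff (hS : Sat n Δ) {α β : Form} :
    α.and β ∈ Δ ↔ α ∈ Δ ∧ β ∈ Δ := by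
  constructor
  · intro h
    exact ⟨hS.mem_mp (hS.mem_thm (ThmCnD.A4 α β)) h,
           hS.mem_mp (hS.mem_thm (ThmCnD.A5 α β)) h⟩
  · rintro ⟨h1, h2⟩
    exact hS.mem_mp (hS.mem_mp (hS.mem_thm (ThmCnD.A3 α β)) h1) h2

theorem or_mem (hS : Sat n Δ) {α β : Form} (h : α.or β ∈ Δ) :
    α ∈ Δ ∨ β ∈ Δ := by
  by_contra hc
  push_neg at hc
  obtain ⟨hclosed, ψ, hψ, hmax⟩ := hS
  have d1 : DerivCnD n Δ (α.imp ψ) := deriv_ded (hmax α hc.1)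
  have d2 : DerivCnD n Δ (β.imp ψ) := deriv_ded (hmax β hc.2)
  have d3 : DerivCnD n Δ ((α.or β).imp ψ) :=
    deriv_mp (deriv_mp (deriv_thm (ThmCnD.A8 α β ψ)) d1) d2
  exact hψ (hclosed _ (deriv_mp d3 (deriv_of_mem h)))

theorem em_mem (hS : Sat n Δ) (α : Form) : α ∈ Δ ∨ α.neg ∈ Δ :=
  hS.or_mem (hS.mem_thm (ThmCnD.EM α))

theorem neg_mem_of_not_mem (hS : Sat n Δ) {α : Form} (h : α ∉ Δ) : α.neg ∈ Δ :=
  (hS.em_mem α).resolve_left h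

theorem cf_mem (hS : Sat n Δ) {α : Form} (h : α.neg.neg ∈ Δ) : α ∈ Δ :=
  hS.mem_mp (hS.mem_thm (ThmCnD.cf α)) h

theorem imp_mem_of_not_mem (hS : Sat n Δ) {α : Form} (β : Form) (h : α ∉ Δ) :
    α.imp β ∈ Δ := by
  by_contra hc
  obtain ⟨hclosed, ψ, hψ, hmax⟩ := hS
  have d1 : DerivCnD n Δ (α.imp ψ) := deriv_ded (hmax α h)
  have d2 : DerivCnD n Δ ((α.imp β).imp ψ) := deriv_ded (hmax _ hc)
  exact hψ (hclosed _ (deriv_mp (deriv_mp (deriv_thm (peirce3 α β ψ)) d1) d2))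

theorem imp_mem_iff (hS : Sat n Δ) {α β : Form} :
    α.imp β ∈ Δ ↔ (α ∈ Δ → β ∈ Δ) := by
  constructor
  · exact fun h ha => hS.mem_mp h ha
  · intro h
    by_cases ha : α ∈ Δ
    · exact hS.mem_mp (hS.mem_thm (ThmCnD.A1 β α)) (h ha)
    · exact hS.imp_mem_of_not_mem β ha

theorem or_mem_iff (hS : Sat n Δ) {α β : Form} :
    α.or β ∈ Δ ↔ α ∈ Δ ∨ β ∈ Δ := by
  constructor
  · exact hS.or_mem
  · rintro (h | h)
    · exact hS.mem_mp (hS.mem_thm (ThmCnD.A6 α β)) h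
    · exact hS.mem_mp (hS.mem_thm (ThmCnD.A7 α β)) h

theorem bigPow_mem (hS : Sat n Δ) {α : Form} :
    ∀ m, 1 ≤ m → ((α.bigPow m ∈ Δ) ↔ ∀ k, 1 ≤ k → k ≤ m → α.pow k ∈ Δ)
  | 0, h => absurd h (by omega)
  | 1, _ => by
    constructor
    · intro h k h1 h2
      have hk : k = 1 := by omega
      subst hk
      exact h
    · intro h
      exact h 1 le_rfl le_rfl
  | (m + 2), _ => by
    have IH := hS.bigPow_mem (α := α) (m + 1) (by omega)
    have hsplit : α.bigPow (m + 2) ∈ Δ ↔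
        (α.bigPow (m + 1)) ∈ Δ ∧ (α.pow (m + 2)) ∈ Δ := hS.and_mem_iff
    constructor
    · intro h k h1 h2
      obtain ⟨ha, hb⟩ := hsplit.mp h
      rcases Nat.lt_or_ge k (m + 2) with hk | hk
      · exact IH.mp ha k h1 (by omega)
      · have : k = m + 2 := by omega
        subst this
        exact hb
    · intro h
      exact hsplit.mpr ⟨IH.mpr (fun k h1 h2 => h k h1 (by omega)),
        h (m + 2) (by omega) le_rfl⟩

theorem explosion (hS : Sat n Δ) {α : Form} (h1 : α ∈ Δ) (h2 : α.neg ∈ Δ)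
    (h3 : α.bigPow n ∈ Δ) : False := by
  obtain ⟨hclosed, ψ, hψ, hmax⟩ := hS
  have hSat : Sat n Δ := ⟨hclosed, ψ, hψ, hmax⟩
  exact hψ (hSat.mem_mp (hSat.mem_mp (hSat.mem_mp
    (hSat.mem_thm (ThmCnD.bcn α ψ)) h3) h1) h2)

theorem step_lemma (hS : Sat n Δ) {β : Form} (h : β.and β.neg ∉ Δ) :
    (β.and β.neg).neg ∈ Δ ∧ ((β.and β.neg).neg).neg ∉ Δ := by
  refine ⟨(hS.em_mem (β.and β.neg)).resolve_left h, fun hc => h (hS.cf_mem hc)⟩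

theorem pow_pos (hS : Sat n Δ) {β : Form} (hna : β.and β.neg ∉ Δ) :
    ∀ k, β.pow (k + 1) ∈ Δ ∧ (β.pow (k + 1)).neg ∉ Δ
  | 0 => hS.step_lemma hna
  | k + 1 => by
    obtain ⟨h1, h2⟩ := hS.pow_pos hna k
    have hna' : (β.pow (k + 1)).and (β.pow (k + 1)).neg ∉ Δ := fun hc =>
      h2 (hS.and_mem_iff.mp hc).2
    exact hS.step_lemma hna'

theorem pow_up (hS : Sat n Δ) {α : Form} {i : ℕ} (h : α.pow (i + 1) ∉ Δ) :
    ∀ j, i < j → α.pow (j + 1) ∈ Δ ∧ (α.pow (j + 1)).neg ∉ Δ := by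
  intro j hj
  have hna : (α.pow (i + 1)).and (α.pow (i + 1)).neg ∉ Δ := fun hc =>
    h (hS.and_mem_iff.mp hc).1
  have hp := hS.pow_pos hna (j - i - 1)
  have e : (α.pow (i + 1)).pow (j - i - 1 + 1) = α.pow (j + 1) := by
    rw [← pow_add]
    congr 1
    omega
  rw [e] at hp
  exact hp

theorem pow_unique (hS : Sat n Δ) {α : Form} {i : ℕ} (h : α.pow (i + 1) ∉ Δ) :
    ∀ j, j ≠ i → α.pow (j + 1) ∈ Δ := by
  intro j hj
  rcases Nat.lt_or_ge i j with hij | hij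
  · exact (hS.pow_up h j hij).1
  · have hji : j < i := by omega
    by_contra hc
    exact h (hS.pow_up hc i hji).1

theorem exists_pow (hS : Sat n Δ) {α : Form} (hn : 1 ≤ n) (h1 : α ∈ Δ)
    (h2 : α.neg ∈ Δ) : ∃ k, k < n ∧ α.pow (k + 1) ∉ Δ := by
  by_contra hc
  push_neg at hc
  have hbig : α.bigPow n ∈ Δ := (hS.bigPow_mem n hn).mpr (fun k hk1 hk2 => by
    have := hc (k - 1) (by omega)
    rwa [show k - 1 + 1 = k by omega] at this)
  exact hS.explosion h1 h2 hbig

theorem notand_of (hS : Sat n Δ) {β : Form} (h : β ∉ Δ ∨ β.neg ∉ Δ) :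
    β.and β.neg ∉ Δ := fun hc => by
  rcases h with h | h
  · exact h (hS.and_mem_iff.mp hc).1
  · exact h (hS.and_mem_iff.mp hc).2

theorem classical_bigPow (hS : Sat n Δ) {α : Form} (hn : 1 ≤ n)
    (h : α.and α.neg ∉ Δ) : α.bigPow n ∈ Δ :=
  (hS.bigPow_mem n hn).mpr (fun k hk1 _ => by
    have := (hS.pow_pos h (k - 1)).1
    rwa [show k - 1 + 1 = k by omega] at this)

theorem not_both_of_bigPow (hS : Sat n Δ) {γ : Form} (h : γ.bigPow n ∈ Δ) :
    γ.and γ.neg ∉ Δ := fun hc => by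
  obtain ⟨h1, h2⟩ := hS.and_mem_iff.mp hc
  exact hS.explosion h1 h2 h

end Sat

end CnDAux

open Classical

section Canonical

variable {n : ℕ}

/-- Auxiliary Bool lemmas -/
theorem bool_eq_of_iff {a b : Bool} (h : a = true ↔ b = true) : a = b := by
  cases a <;> cases b <;> simp_all

theorem boolImp_true {a b : Bool} : boolImp a b = true ↔ (a = true → b = true) := by
  cases a <;> cases b <;> simp [boolImp]

theorem val_one_fin (hn : 1 ≤ n) : ((1 : Fin (n + 1)) : ℕ) = 1 := by
  rw [Fin.val_one']
  exact Nat.mod_eq_of_lt (by omega)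

theorem p1_T : (SVn.T : SVn n).p1 = true := by simp [SVn.p1, SVn.coord]
theorem p1_F : (SVn.F : SVn n).p1 = false := by simp [SVn.p1, SVn.coord]
theorem p1_t (i : Fin n) : (SVn.t i).p1 = true := by simp [SVn.p1, SVn.coord]
theorem p2_T (hn : 1 ≤ n) : (SVn.T : SVn n).p2 = false := by
  simp only [SVn.p2, SVn.coord, val_one_fin hn]
  simp
theorem p2_F (hn : 1 ≤ n) : (SVn.F : SVn n).p2 = true := by
  simp only [SVn.p2, SVn.coord, val_one_fin hn]
  simp
theorem p2_t (hn : 1 ≤ n) (i : Fin n) : (SVn.t i).p2 = true := by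
  simp only [SVn.p2, SVn.coord, val_one_fin hn]
  simp only [decide_eq_true_eq]
  omega

theorem boo_T : (SVn.T : SVn n).boo := Or.inl rfl
theorem boo_F : (SVn.F : SVn n).boo := Or.inr rfl
theorem not_boo_t (i : Fin n) : ¬ (SVn.t i).boo := by
  rintro (h | h) <;> cases h

/-- The canonical valuation determined by a set of formulas. -/
noncomputable def canV (n : ℕ) (Δ : Set Form) (α : Form) : SVn n :=
  if α ∉ Δ then .F
  else if α.neg ∉ Δ then .T
  else if h : ∃ k, k < n ∧ α.pow (k + 1) ∉ Δ then
    .t ⟨Nat.find h, (Nat.find_spec h).1⟩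
  else .F

variable {Δ : Set Form} {α : Form}

theorem canV_eq_F (h : α ∉ Δ) : canV n Δ α = .F := by
  unfold canV
  rw [if_pos h]

theorem canV_eq_T (h1 : α ∈ Δ) (h2 : α.neg ∉ Δ) : canV n Δ α = .T := by
  unfold canV
  rw [if_neg (not_not_intro h1), if_pos h2]

theorem canV_t_spec (hS : CnDAux.Sat n Δ) (hn : 1 ≤ n) (h1 : α ∈ Δ)
    (h2 : α.neg ∈ Δ) : ∃ (m : ℕ) (hm : m < n), canV n Δ α = .t ⟨m, hm⟩ ∧
      α.pow (m + 1) ∉ Δ ∧ ∀ j, j ≠ m → α.pow (j + 1) ∈ Δ := by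
  have hex : ∃ k, k < n ∧ α.pow (k + 1) ∉ Δ := hS.exists_pow hn h1 h2
  unfold canV
  rw [if_neg (not_not_intro h1), if_neg (not_not_intro h2), dif_pos hex]
  refine ⟨_, _, rfl, (Nat.find_spec hex).2, hS.pow_unique (Nat.find_spec hex).2⟩

theorem canV_t_inv {i : Fin n} (h : canV n Δ α = .t i) : α ∈ Δ ∧ α.neg ∈ Δ := by
  by_cases h1 : α ∈ Δ
  · by_cases h2 : α.neg ∈ Δ
    · exact ⟨h1, h2⟩
    · rw [canV_eq_T h1 h2] at h
      cases h
  · rw [canV_eq_F h1] at h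
    cases h

theorem canV_p1 (hS : CnDAux.Sat n Δ) (hn : 1 ≤ n) :
    (canV n Δ α).p1 = true ↔ α ∈ Δ := by
  by_cases h1 : α ∈ Δ
  · by_cases h2 : α.neg ∈ Δ
    · obtain ⟨m, hm, heq, _, _⟩ := canV_t_spec hS hn h1 h2
      rw [heq, p1_t]
      simp [h1]
    · rw [canV_eq_T h1 h2, p1_T]
      simp [h1]
  · rw [canV_eq_F h1, p1_F]
    simp [h1]

theorem canV_p2 (hS : CnDAux.Sat n Δ) (hn : 1 ≤ n) :
    (canV n Δ α).p2 = true ↔ α.neg ∈ Δ := by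
  by_cases h1 : α ∈ Δ
  · by_cases h2 : α.neg ∈ Δ
    · obtain ⟨m, hm, heq, _, _⟩ := canV_t_spec hS hn h1 h2
      rw [heq, p2_t hn]
      simp [h2]
    · rw [canV_eq_T h1 h2, p2_T hn]
      simp [h2]
  · rw [canV_eq_F h1, p2_F hn]
    simp [hS.neg_mem_of_not_mem h1]

theorem boo_canV_iff (hS : CnDAux.Sat n Δ) (hn : 1 ≤ n) :
    (canV n Δ α).boo ↔ α.and α.neg ∉ Δ := by
  by_cases h1 : α ∈ Δ
  · by_cases h2 : α.neg ∈ Δ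
    · obtain ⟨m, hm, heq, _, _⟩ := canV_t_spec hS hn h1 h2
      rw [heq]
      simp only [not_boo_t, false_iff, not_not]
      exact hS.and_mem_iff.mpr ⟨h1, h2⟩
    · rw [canV_eq_T h1 h2]
      simp only [boo_T, true_iff]
      exact hS.notand_of (Or.inr h2)
  · rw [canV_eq_F h1]
    simp only [boo_F, true_iff]
    exact hS.notand_of (Or.inl h1)

end Canonical

namespace CnDAux

variable {n : ℕ}

theorem list_in_chain {c : Set (Set Form)} (hch : IsChain (· ⊆ ·) c)
    {s0 : Set Form} (hs0 : s0 ∈ c) :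
    ∀ L : List Form, (∀ δ ∈ L, δ ∈ ⋃₀ c) → ∃ s ∈ c, ∀ δ ∈ L, δ ∈ s
  | [], _ => ⟨s0, hs0, by simp⟩
  | δ :: L', h => by
    obtain ⟨s, hs, hL'⟩ := list_in_chain hch hs0 L' (fun x hx => h x (by simp [hx]))
    obtain ⟨t, htc, hδt⟩ := h δ (by simp)
    rcases hch.total hs htc with hst | hts
    · refine ⟨t, htc, fun x hx => ?_⟩
      rcases List.mem_cons.mp hx with rfl | hx
      · exact hδt
      · exact hst (hL' x hx)
    · refine ⟨s, hs, fun x hx => ?_⟩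
      rcases List.mem_cons.mp hx with rfl | hx
      · exact hts hδt
      · exact hL' x hx

/-- Lindenbaum-style extension to a saturated theory. -/
theorem lindenbaum {Γ : Set Form} {φ : Form} (h : ¬ DerivCnD n Γ φ) :
    ∃ Δ, Γ ⊆ Δ ∧ Sat n Δ ∧ φ ∉ Δ := by
  set S : Set (Set Form) := {Δ | Γ ⊆ Δ ∧ ¬ DerivCnD n Δ φ} with hSdef
  have hchain : ∀ c ⊆ S, IsChain (· ⊆ ·) c → c.Nonempty →
      ∃ ub ∈ S, ∀ s ∈ c, s ⊆ ub := by
    rintro c hcS hch ⟨s0, hs0⟩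
    refine ⟨⋃₀ c, ⟨(hcS hs0).1.trans (Set.subset_sUnion_of_mem hs0), ?_⟩,
      fun s hs => Set.subset_sUnion_of_mem hs⟩
    intro hd
    obtain ⟨L, hm, hp⟩ := deriv_iff.mp hd
    obtain ⟨s, hs, hLs⟩ := list_in_chain hch hs0 L hm
    exact (hcS hs).2 (deriv_iff.mpr ⟨L, hLs, hp⟩)
  obtain ⟨Δ, hΓΔ, hmax⟩ := zorn_subset_nonempty S hchain Γ ⟨Set.Subset.rfl, h⟩
  have hnd : ¬ DerivCnD n Δ φ := hmax.1.2
  have hins : ∀ χ, χ ∉ Δ → DerivCnD n (insert χ Δ) φ := by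
    intro χ hχ
    by_contra hc
    have hmem : insert χ Δ ∈ S :=
      ⟨hΓΔ.trans (Set.subset_insert χ Δ), hc⟩
    exact hχ (hmax.2 hmem (Set.subset_insert χ Δ) (Set.mem_insert χ Δ))
  have hφΔ : φ ∉ Δ := fun hφ => hnd (deriv_of_mem hφ)
  refine ⟨Δ, hΓΔ, ⟨?_, φ, hφΔ, hins⟩, hφΔ⟩
  intro χ hχ
  by_contra hc
  exact hnd (deriv_cut hχ (hins χ hc))

/-- A saturated theory does not obligate everything. -/
theorem sat_obl_consistent {Δ : Set Form} (hS : Sat n Δ) :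
    ∃ χ, ¬ DerivCnD n {β | β.obl ∈ Δ} χ := by
  by_contra hc
  push_neg at hc
  set γ := Form.var 0 with hγ
  have h1 : γ.obl ∈ Δ := hS.closed (deriv_obl (hc γ))
  have h2 : (Form.snn n γ).obl ∈ Δ := hS.closed (deriv_obl (hc _))
  have h3 : Form.snn n ((Form.snn n γ).obl) ∈ Δ :=
    hS.mem_mp (hS.mem_thm (ThmCnD.Dn γ)) h1
  have h3' : (((Form.snn n γ).obl).neg).and (((Form.snn n γ).obl).bigPow n) ∈ Δ := h3
  obtain ⟨h4, h5⟩ := hS.and_mem_iff.mp h3'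
  exact hS.explosion h2 h4 h5

/-- The canonical Kripke model. -/
theorem canonical_model (hn2 : 2 ≤ n) :
    IsModelCnD n
      (fun (Δ Δ' : {Δ : Set Form // Sat n Δ}) => ∀ β : Form, β.obl ∈ Δ.1 → β ∈ Δ'.1)
      (fun Δ α => canV n Δ.1 α) := by
  have hn : 1 ≤ n := by omega
  refine ⟨⟨?_, ?_, ?_, ?_, ?_, ?_⟩, ⟨?_, ?_⟩, ?_⟩
  -- serial
  · rintro ⟨Δ, hS⟩
    obtain ⟨χ, hχ⟩ := sat_obl_consistent hS
    obtain ⟨Δ', hsub, hS', _⟩ := lindenbaum hχ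
    exact ⟨⟨Δ', hS'⟩, fun β hβ => hsub hβ⟩
  -- and
  · rintro ⟨Δ, hS⟩ α β
    constructor
    · refine bool_eq_of_iff ?_
      rw [canV_p1 hS hn, Bool.and_eq_true, canV_p1 hS hn, canV_p1 hS hn]
      exact hS.and_mem_iff
    · intro ha hb
      rw [boo_canV_iff hS hn] at ha hb ⊢
      have hbig : ((α.bigPow n).and (β.bigPow n)) ∈ Δ :=
        hS.and_mem_iff.mpr ⟨hS.classical_bigPow hn ha, hS.classical_bigPow hn hb⟩
      have hPn := hS.mem_mp (hS.mem_thm (ThmCnD.Pn α β)) hbig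
      obtain ⟨_, hrest⟩ := hS.and_mem_iff.mp hPn
      obtain ⟨_, hand⟩ := hS.and_mem_iff.mp hrest
      exact hS.not_both_of_bigPow hand
  -- or
  · rintro ⟨Δ, hS⟩ α β
    constructor
    · refine bool_eq_of_iff ?_
      rw [canV_p1 hS hn, Bool.or_eq_true, canV_p1 hS hn, canV_p1 hS hn]
      exact hS.or_mem_iff
    · intro ha hb
      rw [boo_canV_iff hS hn] at ha hb ⊢
      have hbig : ((α.bigPow n).and (β.bigPow n)) ∈ Δ :=
        hS.and_mem_iff.mpr ⟨hS.classical_bigPow hn ha, hS.classical_bigPow hn hb⟩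
      have hPn := hS.mem_mp (hS.mem_thm (ThmCnD.Pn α β)) hbig
      obtain ⟨_, hrest⟩ := hS.and_mem_iff.mp hPn
      obtain ⟨hor, _⟩ := hS.and_mem_iff.mp hrest
      exact hS.not_both_of_bigPow hor
  -- imp
  · rintro ⟨Δ, hS⟩ α β
    constructor
    · refine bool_eq_of_iff ?_
      rw [canV_p1 hS hn, boolImp_true, canV_p1 hS hn, canV_p1 hS hn]
      exact hS.imp_mem_iff
    · intro ha hb
      rw [boo_canV_iff hS hn] at ha hb ⊢
      have hbig : ((α.bigPow n).and (β.bigPow n)) ∈ Δ :=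
        hS.and_mem_iff.mpr ⟨hS.classical_bigPow hn ha, hS.classical_bigPow hn hb⟩
      have hPn := hS.mem_mp (hS.mem_thm (ThmCnD.Pn α β)) hbig
      obtain ⟨himp, _⟩ := hS.and_mem_iff.mp hPn
      exact hS.not_both_of_bigPow himp
  -- neg
  · rintro ⟨Δ, hS⟩ α
    constructor
    · refine bool_eq_of_iff ?_
      rw [canV_p1 hS hn, canV_p2 hS hn]
    · rw [Bool.le_iff_imp]
      intro h
      have h1 : α.neg.neg ∈ Δ := (canV_p2 hS hn).mp h
      exact (canV_p1 hS hn).mpr (hS.cf_mem h1)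
  -- obl
  · rintro ⟨Δ, hS⟩ α
    rw [canV_p1 hS hn]
    constructor
    · rintro h ⟨Δ', hS'⟩ hR
      exact (canV_p1 hS' hn).mpr (hR α h)
    · intro hAll
      by_contra hOα
      have hnd0 : ¬ DerivCnD n {β | β.obl ∈ Δ} α := fun hd =>
        hOα (hS.closed (deriv_obl hd))
      obtain ⟨Δ', hsub, hS', hα'⟩ := lindenbaum hnd0
      exact hα' ((canV_p1 hS' hn).mp (hAll ⟨Δ', hS'⟩ (fun β hβ => hsub hβ)))
  -- restriction (i)
  · rintro ⟨Δ, hS⟩ α h0 heq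
    obtain ⟨h1, h2⟩ := canV_t_inv heq
    obtain ⟨m, hm, heq', hpow, huniq⟩ := canV_t_spec hS hn h1 h2
    have hm0 : m = 0 := by
      have := heq.symm.trans heq'
      simp only [SVn.t.injEq, Fin.mk.injEq] at this
      omega
    subst hm0
    have hin : α.and α.neg ∈ Δ := hS.and_mem_iff.mpr ⟨h1, h2⟩
    have hnin : (α.and α.neg).neg ∉ Δ := hpow
    exact canV_eq_T hin hnin
  -- restriction (ii)
  · rintro ⟨Δ, hS⟩ α k hk hk1 heq
    obtain ⟨h1, h2⟩ := canV_t_inv heq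
    obtain ⟨m, hm, heq', hpow, huniq⟩ := canV_t_spec hS hn h1 h2
    have hmk : m = k := by
      have := heq.symm.trans heq'
      simp only [SVn.t.injEq, Fin.mk.injEq] at this
      omega
    subst hmk
    have hp1 : α.pow 1 ∈ Δ := by
      have := huniq 0 (by omega)
      simpa using this
    constructor
    · -- incons of v(α ∧ ¬α)
      have hin : α.and α.neg ∈ Δ := hS.and_mem_iff.mpr ⟨h1, h2⟩
      have hneg1 : (α.and α.neg).neg ∈ Δ := hp1
      obtain ⟨m', hm', heq2, _, _⟩ := canV_t_spec hS hn hin hneg1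
      exact ⟨⟨m', hm'⟩, heq2⟩
    · -- v(α¹) = t (k-1)
      have hp1n : (α.pow 1).neg ∈ Δ := by
        by_contra hcon
        have hna : (α.pow 1).and (α.pow 1).neg ∉ Δ := hS.notand_of (Or.inr hcon)
        have hup := (hS.pow_pos hna (m - 1)).1
        rw [← pow_add, show 1 + (m - 1 + 1) = m + 1 by omega] at hup
        exact hpow hup
      obtain ⟨m', hm', heq2, hpow2, huniq2⟩ := canV_t_spec hS hn hp1 hp1n
      have hm'k : m' = m - 1 := by
        by_contra hne
        have := huniq2 (m - 1) (fun hcc => hne hcc.symm)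
        rw [← pow_add, show 1 + (m - 1 + 1) = m + 1 by omega] at this
        exact hpow this
      subst hm'k
      exact heq2
  -- restriction (iii)
  · rintro ⟨Δ, hS⟩ α hboo
    rw [boo_canV_iff hS hn] at hboo ⊢
    have hbig := hS.classical_bigPow hn hboo
    have hOb : (α.obl).bigPow n ∈ Δ :=
      hS.mem_mp (hS.mem_thm (ThmCnD.POn α)) hbig
    exact hS.not_both_of_bigPow hOb

end CnDAux

/-- Completeness of C_nᴰ (n ≥ 2) w.r.t. swap Kripke models. -/
theorem CnD_completeness (n : ℕ) (hn : 2 ≤ n) (Γ : Set Form) (φ : Form) :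
    SemCnD n Γ φ → DerivCnD n Γ φ := by
  intro hsem
  by_contra hnd
  obtain ⟨Δs, hΓ, hSat, hφ⟩ := CnDAux.lindenbaum hnd
  have hn1 : 1 ≤ n := by omega
  have hmodel := CnDAux.canonical_model (n := n) hn
  have hdes := hsem {Δ : Set Form // CnDAux.Sat n Δ}
    (fun Δ Δ' => ∀ β : Form, β.obl ∈ Δ.1 → β ∈ Δ'.1)
    (fun Δ α => canV n Δ.1 α) ⟨⟨Δs, hSat⟩⟩ hmodel ⟨Δs, hSat⟩
    (fun γ hγ => (canV_p1 hSat hn1).mpr (hΓ hγ))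
  exact hφ ((canV_p1 hSat hn1).mp hdes)
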